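/- Density kernels are closed under joint (conditional-product) distributions: if f : Z ⇝ X admits density p_f with respect to σ-finite μ_X and g : X ⇝ Y admits jointly measurable density p_g with respect to σ-finite μ_Y, then the joint kernel h : Z ⇝ X × Y defined by h(z)(σ) = ∫_X g(x)({y | (x,y) ∈ σ}) df(z)(x) admits the density (x,y) ↦ p_f(x|z)·p_g(y|x) with respect to μ_X × μ_Y. -/
import Mathlib


open MeasureTheory ProbabilityTheory

theorem density_kernels_closed_under_joints {Z X Y : Type*}
    [MeasurableSpace Z] [MeasurableSpace X] [MeasurableSpace Y]
    (f : Kernel Z X) [IsMarkovKernel f] (g : Kernel X Y) [IsMarkovKernel g]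
    (μX : Measure X) [SigmaFinite μX] (μY : Measure Y) [SigmaFinite μY]
    (pf : Z × X → ENNReal) (hpf : Measurable pf)
    (pg : X × Y → ENNReal) (hpg : Measurable pg)
    (hf : ∀ z (σ : Set X), MeasurableSet σ → f z σ = ∫⁻ x in σ, pf (z, x) ∂μX)
    (hg : ∀ x (σ : Set Y), MeasurableSet σ → g x σ = ∫⁻ y in σ, pg (x, y) ∂μY) :
    ∀ z (σ : Set (X × Y)), MeasurableSet σ →
      ∫⁻ x, g x {y | (x, y) ∈ σ} ∂(f z)
        = ∫⁻ q in σ, pf (z, q.1) * pg (q.1, q.2) ∂(μX.prod μY) := by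
  intro z σ hσ
  have hfz : f z = μX.withDensity (fun x => pf (z, x)) := by
    ext s hs
    rw [hf z s hs, withDensity_apply _ hs]
  have hmeas : Measurable fun x => g x {y | (x, y) ∈ σ} :=
    Kernel.measurable_kernel_prodMk_left hσ
  rw [hfz, lintegral_withDensity_eq_lintegral_mul _ (show Measurable fun x => pf (z, x) from hpf.comp measurable_prodMk_left) hmeas]
  have hF : Measurable fun q : X × Y => σ.indicator (fun q => pf (z, q.1) * pg q) q :=
    (((hpf.comp (measurable_const.prodMk measurable_fst)).mul hpg)).indicator hσ
  rw [show (∫⁻ q in σ, pf (z, q.1) * pg (q.1, q.2) ∂(μX.prod μY))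
      = ∫⁻ q, σ.indicator (fun q => pf (z, q.1) * pg q) q ∂(μX.prod μY) by
    rw [lintegral_indicator hσ],
    lintegral_prod _ hF.aemeasurable]
  refine lintegral_congr fun x => ?_
  have hsec : MeasurableSet {y | (x, y) ∈ σ} := measurable_prodMk_left hσ
  simp only [Pi.mul_apply]
  rw [hg x _ hsec]
  calc pf (z, x) * ∫⁻ y in {y | (x, y) ∈ σ}, pg (x, y) ∂μY
      = ∫⁻ y in {y | (x, y) ∈ σ}, pf (z, x) * pg (x, y) ∂μY := by
        rw [lintegral_const_mul _ (show Measurable fun y => pg (x, y) from hpg.comp measurable_prodMk_left)]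
    _ = ∫⁻ y, σ.indicator (fun q => pf (z, q.1) * pg q) (x, y) ∂μY := by
        rw [← lintegral_indicator hsec]
        rfl
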